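/- Let n ≥ 2, let f_1, ..., f_n : ℝ → ℝ be continuous and bounded, let K_1, ..., K_n be probability density functions on [0,∞), and let μ : ℝ → ℝ be continuous with μ(y) ≥ μ₀ for all y, for some μ₀ > 0. For a bounded continuous function y : ℝ → ℝ define recursively G_0[y] = y and, for i = 1, ..., n-1, G_i[y](t) = ∫_0^∞ f_i( ∫_0^∞ G_{i-1}[y](t - s - φ) K_i(φ) dφ ) · exp(-∫_{t-s}^t μ(y(u)) du) ds. Suppose x_1, ..., x_n : ℝ → ℝ are bounded differentiable functions satisfying, for every t ∈ ℝ and every i ∈ {1, ..., n} (with the convention x_0 := x_n), x_i'(t) = f_i(∫_0^∞ x_{i-1}(t - φ) K_i(φ) dφ) - μ(x_n(t)) x_i(t). Then for every t ∈ ℝ, x_n'(t) = f_n( ∫_0^∞ G_{n-1}[x_n](t - φ) K_n(φ) dφ ) - μ(x_n(t)) x_n(t). -/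

import Mathlib

open MeasureTheory

open Set Filter in
/-- Variation of constants: a bounded solution of `x' = g - m·x` with `m ≥ μ₀ > 0`
equals the improper integral representation. -/
lemma varconst (x g m : ℝ → ℝ) (μ₀ Cx Cg : ℝ) (hμ₀ : 0 < μ₀)
    (hm : Continuous m) (hmlb : ∀ u, μ₀ ≤ m u)
    (hg : Continuous g) (hgb : ∀ t, |g t| ≤ Cg)
    (hxb : ∀ t, |x t| ≤ Cx)
    (hder : ∀ t, HasDerivAt x (g t - m t * x t) t) (t : ℝ) :
    x t = ∫ s in Set.Ioi (0:ℝ), g (t - s) * Real.exp (-∫ u in (t-s)..t, m u) := by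
  have hCx : 0 ≤ Cx := le_trans (abs_nonneg _) (hxb 0)
  have hCg : 0 ≤ Cg := le_trans (abs_nonneg _) (hgb 0)
  set A : ℝ → ℝ := fun y => ∫ u in (0:ℝ)..y, m u with hA
  have hAint : ∀ a b : ℝ, IntervalIntegrable m volume a b := fun a b =>
    hm.intervalIntegrable a b
  have hAd : ∀ y : ℝ, HasDerivAt A (m y) y := by
    intro y
    exact intervalIntegral.integral_hasDerivAt_right (hAint 0 y)
      hm.stronglyMeasurable.stronglyMeasurableAtFilter hm.continuousAt
  have hAcont : Continuous A := by
    rw [continuous_iff_continuousAt]; exact fun y => (hAd y).continuousAt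
  have hsub : ∀ s : ℝ, (∫ u in (t-s)..t, m u) = A t - A (t - s) := by
    intro s
    exact (intervalIntegral.integral_interval_sub_left (hAint 0 t) (hAint 0 (t - s))).symm
  set E : ℝ → ℝ := fun s => Real.exp (A (t - s) - A t) with hE
  have hEeq : ∀ s, Real.exp (-∫ u in (t-s)..t, m u) = E s := by
    intro s; rw [hsub]; congr 1; ring
  set F : ℝ → ℝ := fun s => x (t - s) * E s with hF
  have hts : ∀ s : ℝ, HasDerivAt (fun s : ℝ => t - s) (-1) s := by
    intro s
    exact (hasDerivAt_id' s).const_sub t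
  have hFd : ∀ s : ℝ, HasDerivAt F (-(g (t - s) * E s)) s := by
    intro s
    have hx' : HasDerivAt (fun s : ℝ => x (t - s))
        ((g (t - s) - m (t - s) * x (t - s)) * (-1)) s :=
      (hder (t - s)).comp s (hts s)
    have hAd' : HasDerivAt (fun s : ℝ => A (t - s) - A t) (m (t - s) * (-1)) s :=
      (((hAd (t - s)).comp s (hts s))).sub_const (A t)
    have hEd : HasDerivAt E (Real.exp (A (t - s) - A t) * (m (t - s) * (-1))) s :=
      hAd'.exp
    have := hx'.mul hEd
    refine HasDerivAt.congr_deriv this ?_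
    simp only [hE, E]
    ring
  have hEcont : Continuous E :=
    Real.continuous_exp.comp
      ((hAcont.comp (continuous_const.sub continuous_id)).sub continuous_const)
  have hintegrand : Continuous fun s => g (t - s) * E s :=
    (hg.comp (continuous_const.sub continuous_id)).mul hEcont
  have hEbound : ∀ s : ℝ, 0 ≤ s → E s ≤ Real.exp (-(μ₀ * s)) := by
    intro s hs
    apply Real.exp_le_exp.mpr
    have h1 : μ₀ * s ≤ ∫ u in (t-s)..t, m u := by
      have : (∫ u in (t-s)..t, (μ₀ : ℝ)) ≤ ∫ u in (t-s)..t, m u := by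
        apply intervalIntegral.integral_mono_on (by linarith)
          (intervalIntegrable_const) (hAint _ _)
        intro u _; exact hmlb u
      simpa [intervalIntegral.integral_const, smul_eq_mul, mul_comm] using this
    rw [hsub] at h1
    linarith
  have hEpos : ∀ s, 0 < E s := fun s => Real.exp_pos _
  have hFlim : Tendsto F atTop (nhds 0) := by
    apply squeeze_zero_norm' (a := fun s => Cx * Real.exp (-(μ₀ * s)))
    · filter_upwards [eventually_ge_atTop (0:ℝ)] with s hs
      have : ‖F s‖ = |x (t - s)| * E s := by
        rw [hF]; simp [abs_mul, abs_of_pos (hEpos s)]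
      rw [this]
      exact mul_le_mul (hxb _) (hEbound s hs) (le_of_lt (hEpos s)) hCx
    · have h1 : Tendsto (fun s : ℝ => μ₀ * s) atTop atTop :=
        Tendsto.const_mul_atTop hμ₀ tendsto_id
      have := (Real.tendsto_exp_neg_atTop_nhds_zero.comp h1).const_mul Cx
      simpa using this
  have hFTC : ∀ S : ℝ, (∫ s in (0:ℝ)..S, g (t - s) * E s) = F 0 - F S := by
    intro S
    have := intervalIntegral.integral_eq_sub_of_hasDerivAt
      (f := F) (f' := fun s => -(g (t - s) * E s)) (a := (0:ℝ)) (b := S)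
      (fun s _ => hFd s) (hintegrand.neg.intervalIntegrable 0 S)
    rw [intervalIntegral.integral_neg] at this
    linarith [this]
  have hint : IntegrableOn (fun s => g (t - s) * E s) (Ioi (0:ℝ)) volume := by
    apply Integrable.mono' ((exp_neg_integrableOn_Ioi 0 hμ₀).const_mul Cg)
      hintegrand.aestronglyMeasurable.restrict
    filter_upwards [ae_restrict_mem measurableSet_Ioi] with s hs
    have : ‖g (t - s) * E s‖ = |g (t - s)| * E s := by
      simp [abs_mul, abs_of_pos (hEpos s)]
    rw [this]
    calc |g (t - s)| * E s ≤ Cg * Real.exp (-(μ₀ * s)) :=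
          mul_le_mul (hgb _) (hEbound s (le_of_lt hs)) (le_of_lt (hEpos s)) hCg
      _ = Cg * Real.exp (-μ₀ * s) := by ring_nf
  have h1 : Tendsto (fun S : ℝ => ∫ s in (0:ℝ)..S, g (t - s) * E s) atTop
      (nhds (∫ s in Ioi (0:ℝ), g (t - s) * E s)) :=
    intervalIntegral_tendsto_integral_Ioi 0 hint tendsto_id
  have h2 : Tendsto (fun S : ℝ => ∫ s in (0:ℝ)..S, g (t - s) * E s) atTop
      (nhds (x t)) := by
    have : Tendsto (fun S => F 0 - F S) atTop (nhds (F 0 - 0)) :=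
      tendsto_const_nhds.sub hFlim
    have hF0 : F 0 = x t := by simp [hF, hE]
    simp only [hFTC]
    simpa [hF0] using this
  have := tendsto_nhds_unique h2 h1
  rw [this]
  apply integral_congr_ae
  filter_upwards with s
  rw [hEeq s]

open Set Filter in
/-- Continuity of the distributed-delay term. -/
lemma inner_cont (w Ki : ℝ → ℝ) (Cw : ℝ) (hw : Continuous w) (hwb : ∀ t, |w t| ≤ Cw)
    (hK : Measurable Ki) (hKi : IntegrableOn Ki (Ioi (0:ℝ)) volume) :
    Continuous fun t => ∫ φ in Ioi (0:ℝ), w (t - φ) * Ki φ := by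
  apply continuous_of_dominated (bound := fun φ => Cw * |Ki φ|)
  · intro t
    exact ((hw.comp (continuous_const.sub continuous_id)).measurable.mul
      hK).aestronglyMeasurable.restrict
  · intro t
    filter_upwards with φ
    rw [norm_mul, Real.norm_eq_abs, Real.norm_eq_abs]
    exact mul_le_mul_of_nonneg_right (hwb _) (abs_nonneg _)
  · exact hKi.abs.const_mul Cw
  · filter_upwards with φ
    exact (hw.comp (continuous_id.sub continuous_const)).mul continuous_const

/-- The nested functionals `G_i` of the generalized linear chain technique:
`G_0[y] = y` and
`G_i[y](t) = ∫_0^∞ f_i(∫_0^∞ G_{i-1}[y](t-s-φ) K_i(φ) dφ) exp(-∫_{t-s}^t μ(y(u)) du) ds`. -/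
noncomputable def cyclicG (f K : ℕ → ℝ → ℝ) (μ : ℝ → ℝ) : ℕ → (ℝ → ℝ) → ℝ → ℝ
  | 0, y, t => y t
  | i + 1, y, t =>
      ∫ s in Set.Ioi (0 : ℝ),
        f (i + 1) (∫ φ in Set.Ioi (0 : ℝ), cyclicG f K μ i y (t - s - φ) * K (i + 1) φ)
          * Real.exp (-∫ u in (t - s)..t, μ (y u))

/-- Theorem 2.2: the last component of a bounded solution of the cyclic
distributed-delay system satisfies a scalar distributed DDE built from the
nested functionals `G_{n-1}`. -/
theorem stmt4
    (n : ℕ) (hn : 2 ≤ n)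
    (f K : ℕ → ℝ → ℝ) (μ : ℝ → ℝ) (μ₀ : ℝ)
    (hfcont : ∀ i, 1 ≤ i → i ≤ n → Continuous (f i))
    (hfbdd : ∀ i, 1 ≤ i → i ≤ n → ∃ C, ∀ y, |f i y| ≤ C)
    (hKmeas : ∀ i, 1 ≤ i → i ≤ n → Measurable (K i))
    (hKnonneg : ∀ i, 1 ≤ i → i ≤ n → ∀ φ : ℝ, 0 ≤ φ → 0 ≤ K i φ)
    (hKint : ∀ i, 1 ≤ i → i ≤ n → ∫ φ in Set.Ioi (0 : ℝ), K i φ = 1)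
    (hμcont : Continuous μ) (hμ₀ : 0 < μ₀) (hμlb : ∀ y, μ₀ ≤ μ y)
    (x : ℕ → ℝ → ℝ)
    (hxbdd : ∀ i, 1 ≤ i → i ≤ n → ∃ C, ∀ t, |x i t| ≤ C)
    (hx0 : x 0 = x n)
    (hode : ∀ i, 1 ≤ i → i ≤ n → ∀ t : ℝ,
      HasDerivAt (x i)
        (f i (∫ φ in Set.Ioi (0 : ℝ), x (i - 1) (t - φ) * K i φ)
          - μ (x n t) * x i t) t) :
    ∀ t : ℝ, HasDerivAt (x n)
      (f n (∫ φ in Set.Ioi (0 : ℝ), cyclicG f K μ (n - 1) (x n) (t - φ) * K n φ)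
        - μ (x n t) * x n t) t := by
  intro t
  have hn1le : 1 ≤ n := by omega
  have hKintOn : ∀ i, 1 ≤ i → i ≤ n → IntegrableOn (K i) (Set.Ioi (0:ℝ)) volume := by
    intro i h1 h2
    by_contra h
    have := hKint i h1 h2
    rw [integral_undef h] at this
    norm_num at this
  have hxc : ∀ i, 1 ≤ i → i ≤ n → Continuous (x i) := by
    intro i h1 h2
    have hd : Differentiable ℝ (x i) := fun τ => (hode i h1 h2 τ).differentiableAt
    exact hd.continuous
  have hxc0 : ∀ i, i ≤ n → Continuous (x i) := by
    intro i hi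
    rcases Nat.eq_zero_or_pos i with h | h
    · subst h; rw [hx0]; exact hxc n hn1le le_rfl
    · exact hxc i h hi
  have hxb0 : ∀ i, i ≤ n → ∃ C, ∀ τ, |x i τ| ≤ C := by
    intro i hi
    rcases Nat.eq_zero_or_pos i with h | h
    · subst h; rw [hx0]; exact hxbdd n hn1le le_rfl
    · exact hxbdd i h hi
  have key : ∀ i, i ≤ n - 1 → ∀ τ, x i τ = cyclicG f K μ i (x n) τ := by
    intro i
    induction i with
    | zero => intro _ τ; rw [hx0]; rfl
    | succ i ih =>
      intro hi τ
      have hi1 : 1 ≤ i + 1 := Nat.succ_le_succ (Nat.zero_le i)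
      have hin : i + 1 ≤ n := le_trans hi (Nat.sub_le n 1)
      have hiin : i ≤ n := by omega
      obtain ⟨Cw, hCw⟩ := hxb0 i hiin
      have hwc : Continuous (x i) := hxc0 i hiin
      obtain ⟨Cg, hCg⟩ := hfbdd (i+1) hi1 hin
      set g : ℝ → ℝ :=
        fun τ => f (i+1) (∫ φ in Set.Ioi (0:ℝ), x i (τ - φ) * K (i+1) φ) with hgdef
      have hgc : Continuous g := (hfcont (i+1) hi1 hin).comp
        (inner_cont (x i) (K (i+1)) Cw hwc hCw (hKmeas _ hi1 hin) (hKintOn _ hi1 hin))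
      obtain ⟨Cx', hCx'⟩ := hxbdd (i+1) hi1 hin
      have hder : ∀ τ, HasDerivAt (x (i+1)) (g τ - μ (x n τ) * x (i+1) τ) τ := by
        intro τ
        have := hode (i+1) hi1 hin τ
        simpa [hgdef] using this
      have hrep := varconst (x (i+1)) g (fun u => μ (x n u)) μ₀ Cx' Cg hμ₀
        (hμcont.comp (hxc n hn1le le_rfl)) (fun u => hμlb _) hgc
        (fun τ => hCg _) hCx' hder τ
      rw [hrep]
      show _ = cyclicG f K μ (i+1) (x n) τ
      rw [cyclicG]
      apply integral_congr_ae
      filter_upwards with s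
      congr 2
      simp only [hgdef]
      congr 1
      apply integral_congr_ae
      filter_upwards with φ
      rw [show (τ - s) - φ = τ - s - φ from rfl, ih (by omega) (τ - s - φ)]
  have hfinal := hode n hn1le le_rfl t
  have heq : (∫ φ in Set.Ioi (0:ℝ), x (n-1) (t - φ) * K n φ)
      = ∫ φ in Set.Ioi (0:ℝ), cyclicG f K μ (n-1) (x n) (t - φ) * K n φ := by
    apply integral_congr_ae
    filter_upwards with φ
    rw [key (n-1) le_rfl (t - φ)]
  rw [heq] at hfinal
  exact hfinal
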